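/- With g(1/k) = 2^(2k-2)·(k!)²/(2k)!, there exists an integer k₀ ≤ 62460059 such that for all integers k ≥ k₀, g(1/k)/(1 + log 4 + log g(1/k)) ≥ 256. -/
import Mathlib


open Real

/-- `g(1/k) = 2^(2k-2)·(k!)²/(2k)!`. -/
noncomputable def gOfRec (k : ℕ) : ℝ :=
  (2:ℝ) ^ (2 * (k : ℝ) - 2) * (Nat.factorial k : ℝ) ^ 2 / (Nat.factorial (2 * k) : ℝ)

lemma gpos (k : ℕ) : 0 < gOfRec k := by
  unfold gOfRec
  positivity

lemma grec (k : ℕ) : gOfRec (k+1) = gOfRec k * (2*(k:ℝ)+2) / (2*(k:ℝ)+1) := by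
  unfold gOfRec
  have h2 : (2:ℝ) ^ (2 * ((k:ℝ)+1) - 2) = (2:ℝ) ^ (2 * (k:ℝ) - 2) * 4 := by
    rw [show 2 * ((k:ℝ)+1) - 2 = (2 * (k:ℝ) - 2) + 2 by ring, Real.rpow_add two_pos]
    norm_num
  have hf : (Nat.factorial (2 * (k+1)) : ℝ)
      = (2*(k:ℝ)+2) * ((2*(k:ℝ)+1) * (Nat.factorial (2*k) : ℝ)) := by
    rw [show 2*(k+1) = (2*k+1)+1 by ring, Nat.factorial_succ, Nat.factorial_succ]
    push_cast; ring
  have hne : (Nat.factorial (2*k) : ℝ) ≠ 0 := by positivity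
  have hne1 : (2*(k:ℝ)+1) ≠ 0 := by positivity
  push_cast [hf, Nat.factorial_succ, h2]
  field_simp
  ring

lemma gsq : ∀ k : ℕ, 1 ≤ k → (2*(k:ℝ)+1)/12 ≤ (gOfRec k)^2 := by
  intro k hk
  induction k with
  | zero => omega
  | succ n ih =>
    rcases Nat.eq_or_lt_of_le hk with h | h
    · have h1 : n = 0 := by omega
      subst h1
      unfold gOfRec
      norm_num
    · have hn : 1 ≤ n := by omega
      have ihn := ih hn
      rw [grec]
      have ihn' : 2*(n:ℝ)+1 ≤ 12 * (gOfRec n)^2 := by linarith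
      rw [div_pow, mul_pow, div_le_div_iff₀ (by norm_num) (by positivity)]
      push_cast
      nlinarith [sq_nonneg ((n:ℝ)+1), gpos n]

lemma key (b : ℝ) (hb : 3226 ≤ b) : 256 ≤ b / (1 + Real.log 4 + Real.log b) := by
  have hb0 : 0 < b := by linarith
  have hl4 : Real.log 4 ≤ 1.39 := by
    have h4 : Real.log 4 = 2 * Real.log 2 := by
      rw [show (4:ℝ) = 2^2 by norm_num, Real.log_pow]; push_cast; ring
    have := Real.log_two_lt_d9
    linarith
  have h9 : Real.log 3226 ≤ 9 := by
    rw [Real.log_le_iff_le_exp (by norm_num)]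
    have h27 : (2.7:ℝ) ≤ Real.exp 1 := by linarith [Real.exp_one_gt_d9]
    calc (3226:ℝ) ≤ 2.7^9 := by norm_num
    _ ≤ (Real.exp 1)^9 := pow_le_pow_left₀ (by norm_num) h27 9
    _ = Real.exp 9 := by rw [← Real.exp_nat_mul]; norm_num
  have hlogb : Real.log b ≤ 9 + (b/3226 - 1) := by
    have h1 := Real.log_le_sub_one_of_pos (show 0 < b/3226 by positivity)
    have hsplit : Real.log b = Real.log 3226 + Real.log (b/3226) := by
      rw [← Real.log_mul (by norm_num) (by positivity)]
      congr 1; field_simp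
    linarith
  have hlb : 0 < Real.log b := Real.log_pos (by linarith)
  have hl4p : 0 < Real.log 4 := Real.log_pos (by norm_num)
  have hD : 0 < 1 + Real.log 4 + Real.log b := by linarith
  rw [le_div_iff₀ hD]
  nlinarith

/-- There exists an integer `k₀ ≤ 62460059` such that for all integers `k ≥ k₀`,
`g(1/k)/(1 + log 4 + log g(1/k)) ≥ 256`. -/
theorem numerical_threshold :
    ∃ k₀ : ℕ, 1 ≤ k₀ ∧ k₀ ≤ 62460059 ∧
      ∀ k : ℕ, k₀ ≤ k →
        256 ≤ gOfRec k / (1 + Real.log 4 + Real.log (gOfRec k)) := by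
  refine ⟨62460059, by norm_num, le_refl _, fun k hk => ?_⟩
  have hk1 : 1 ≤ k := le_trans (by norm_num) hk
  have hg2 := gsq k hk1
  have hgpos := gpos k
  have hkc : (62460059:ℝ) ≤ (k:ℝ) := by exact_mod_cast hk
  have hb : (3226:ℝ) ≤ gOfRec k := by nlinarith
  exact key _ hb
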